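/- arXiv:1306.6866 — 2 statements merged into one kernel-verified Lean document; each statement's English description precedes it below -/
import Mathlib

section
/- Let n ≥ 1 be an integer and let c_{2n} = c_{2n,1}. Then for every t > 0, c_{2n}(t) = Σ_{j=0}^{n−1} C(n−1,j) (−1)^j (2j)! (1 − e^{−t} p_{2j}(t)) / t^{2j+1}, where C(n−1,j) is a binomial coefficient and p_{2j} is the Taylor polynomial of e^t of order 2j centered at t = 0. Equivalently, the Weyl symbol of the inverse of the harmonic oscillator on ℝ^{2n} is b_{2n}(X) = Σ_{j=0}^{n−1} C(n−1,j) (−1)^j (2j)! (1 − e^{−|X|²} p_{2j}(|X|²)) / |X|^{2+4j}. -/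
open scoped Nat

/-- The function `c_{d,α}` of the paper: the candidate (rescaled radial profile of the)
Weyl symbol of the inverse of the harmonic oscillator, depending on a parameter `α`. -/
noncomputable def cda (d : ℕ) (α : ℝ) (t : ℝ) : ℝ :=
  ((d‼ : ℝ) / d) *
    (α * (∑' p : ℕ, t ^ (2*p) / (((2*p)‼ * (2*p + d - 1)‼ : ℕ) : ℝ)) -
      ∑' p : ℕ, t ^ (2*p+1) / (((2*p+1)‼ * (2*p + d)‼ : ℕ) : ℝ))

/-- `taylorExp k t` is the Taylor polynomial of `e^t` of order `k` centered at `0`. -/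
noncomputable def taylorExp (k : ℕ) (t : ℝ) : ℝ :=
  ∑ i ∈ Finset.range (k + 1), t ^ i / (i ! : ℝ)

open Finset

private lemma df_odd_ge (p : ℕ) : 2^p * p ! ≤ (2*p+1)‼ := by
  induction p with
  | zero => simp
  | succ p ih =>
    have h : 2*(p+1)+1 = (2*p+1)+2 := by ring
    rw [h, Nat.doubleFactorial_add_two]
    calc 2^(p+1) * (p+1)! = (2*(p+1)) * (2^p * p !) := by
          rw [Nat.factorial_succ]; ring
      _ ≤ (2*p+1+2) * (2*p+1)‼ := Nat.mul_le_mul (by omega) ih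

private lemma claimE (p : ℕ) : ∀ K : ℕ,
    (2*p)! * ∏ i ∈ range (K+1), (2*p+1+2*i) = (2*p)‼ * (2*p+2*K+1)‼ := by
  intro K
  induction K with
  | zero =>
    rw [Finset.prod_range_one]
    calc (2*p)! * (2*p+1+2*0) = (2*p+1)! := by rw [Nat.factorial_succ]; ring
      _ = (2*p+1)‼ * (2*p)‼ := Nat.factorial_eq_mul_doubleFactorial (2*p)
      _ = (2*p)‼ * (2*p+2*0+1)‼ := by rw [mul_comm]
  | succ K ih =>
    have h1 : 2*p+2*(K+1)+1 = (2*p+2*K+1)+2 := by ring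
    rw [Finset.prod_range_succ, ← mul_assoc, ih, h1, Nat.doubleFactorial_add_two]
    have h2 : 2*p+1+2*(K+1) = 2*p+2*K+1+2 := by ring
    rw [h2]; ring

private lemma claimO (p : ℕ) : ∀ K : ℕ,
    (2*p+1)! * ∏ i ∈ range (K+1), (2*p+2+2*i) = (2*p+1)‼ * (2*p+2*K+2)‼ := by
  intro K
  induction K with
  | zero =>
    rw [Finset.prod_range_one]
    calc (2*p+1)! * (2*p+2+2*0) = (2*p+2)! := by rw [Nat.factorial_succ (2*p+1)]; ring
      _ = (2*p+2)‼ * (2*p+1)‼ := by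
          simpa using Nat.factorial_eq_mul_doubleFactorial (2*p+1)
      _ = (2*p+1)‼ * (2*p+2*0+2)‼ := by rw [mul_comm]
  | succ K ih =>
    have h1 : 2*p+2*(K+1)+2 = (2*p+2*K+2)+2 := by ring
    have h3 : ((2*p+2*K+2)+2)‼ = ((2*p+2*K+2)+2) * (2*p+2*K+2)‼ :=
      Nat.doubleFactorial_add_two _
    have h2 : 2*p+2+2*(K+1) = 2*p+2*K+2+2 := by ring
    rw [Finset.prod_range_succ, ← mul_assoc, ih, h1, h3, h2]; ring

private lemma key_sum : ∀ (N : ℕ) (x : ℝ), 0 < x →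
    ∑ j ∈ range (N+1), (N.choose j : ℝ) * (-1)^j / (2*j+x) =
      ((N ! : ℕ) : ℝ) * 2^N / ∏ i ∈ range (N+1), (x+2*i) := by
  intro N
  induction N with
  | zero => intro x hx; simp
  | succ N ih =>
    intro x hx
    have hx' : (0:ℝ) < x + 2 := by linarith
    have hsummand : ∀ j ∈ range (N+1),
        (((N+1).choose (j+1) : ℕ) : ℝ) * (-1)^(j+1) / (2*(j+1 : ℕ)+x)
          = ((N.choose (j+1) : ℕ) : ℝ) * (-1)^(j+1) / (2*(j+1 : ℕ)+x)
            - ((N.choose j : ℕ) : ℝ) * (-1)^j / (2*(j : ℕ)+(x+2)) := by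
      intro j _
      rw [Nat.choose_succ_succ]
      have hd : 2*((j:ℝ)+1)+x = 2*(j:ℝ)+(x+2) := by ring
      push_cast
      rw [hd]
      ring
    have hpiece1 : ∑ j ∈ range (N+1),
        ((N.choose (j+1) : ℕ) : ℝ) * (-1)^(j+1) / (2*(j+1 : ℕ)+x)
        = (∑ j ∈ range (N+1), ((N.choose j : ℕ) : ℝ) * (-1)^j / (2*(j:ℕ)+x)) - 1/x := by
      rw [Finset.sum_range_succ, Nat.choose_succ_self,
        Finset.sum_range_succ' (fun j => ((N.choose j : ℕ) : ℝ) * (-1)^j / (2*(j:ℕ)+x)) N]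
      simp
    calc ∑ j ∈ range (N+1+1), (((N+1).choose j : ℕ) : ℝ) * (-1)^j / (2*j+x)
        = (∑ j ∈ range (N+1), (((N+1).choose (j+1) : ℕ) : ℝ) * (-1)^(j+1) / (2*(j+1:ℕ)+x))
          + (((N+1).choose 0 : ℕ) : ℝ) * (-1)^0 / (2*(0:ℕ)+x) := by
          rw [Finset.sum_range_succ']
      _ = ((∑ j ∈ range (N+1), ((N.choose j : ℕ) : ℝ) * (-1)^j / (2*(j:ℕ)+x)) - 1/x)
          - (∑ j ∈ range (N+1), ((N.choose j : ℕ) : ℝ) * (-1)^j / (2*(j:ℕ)+(x+2)))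
          + 1/x := by
          rw [Finset.sum_congr rfl hsummand, Finset.sum_sub_distrib, hpiece1]
          simp
      _ = (((N ! : ℕ) : ℝ) * 2^N / ∏ i ∈ range (N+1), (x+2*i))
          - (((N ! : ℕ) : ℝ) * 2^N / ∏ i ∈ range (N+1), ((x+2)+2*i)) := by
          rw [ih x hx, ih (x+2) hx']; ring
      _ = (((N+1)! : ℕ) : ℝ) * 2^(N+1) / ∏ i ∈ range (N+1+1), (x+2*i) := by
          have hP1 : (0:ℝ) < ∏ i ∈ range (N+1), (x+2*i) :=
            Finset.prod_pos (fun i _ => by positivity)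
          have hP2 : (0:ℝ) < ∏ i ∈ range (N+1), ((x+2)+2*i) :=
            Finset.prod_pos (fun i _ => by positivity)
          have hQ1 : ∏ i ∈ range (N+1+1), (x+2*i)
              = (∏ i ∈ range (N+1), (x+2*i)) * (x+2*(N+1)) := by
            rw [Finset.prod_range_succ]; push_cast; ring_nf
          have hQ2 : ∏ i ∈ range (N+1+1), (x+2*i)
              = (∏ i ∈ range (N+1), ((x+2)+2*i)) * x := by
            rw [Finset.prod_range_succ' (fun i => x+2*(i:ℕ)) (N+1)]
            congr 1
            · exact Finset.prod_congr rfl (fun i _ => by push_cast; ring)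
            · norm_num
          have hrel : (∏ i ∈ range (N+1), (x+2*i)) * (x+2*(N+1))
              = (∏ i ∈ range (N+1), ((x+2)+2*i)) * x := by rw [← hQ1, hQ2]
          have hfs : ((N+1)! : ℕ) = (N+1) * N ! := Nat.factorial_succ N
          rw [hQ2, hfs]
          push_cast
          set P1 : ℝ := ∏ i ∈ range (N+1), (x+2*(i:ℕ)) with hP1def
          set P2 : ℝ := ∏ i ∈ range (N+1), ((x+2)+2*(i:ℕ)) with hP2def
          have e1 : ((N ! : ℕ) : ℝ) * 2^N / P1
              = ((N ! : ℕ) : ℝ) * 2^N * (x+2*((N:ℝ)+1)) / (P2*x) := by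
            rw [div_eq_div_iff hP1.ne' (mul_pos hP2 hx).ne']
            linear_combination (-(((N ! : ℕ) : ℝ) * 2^N)) * hrel
          have e2 : ((N ! : ℕ) : ℝ) * 2^N / P2
              = ((N ! : ℕ) : ℝ) * 2^N * x / (P2*x) := by
            rw [div_eq_div_iff hP2.ne' (mul_pos hP2 hx).ne']
            ring
          rw [e1, e2, div_sub_div_same]
          congr 1
          ring

private lemma hasSum_exp_neg (t : ℝ) :
    HasSum (fun m : ℕ => (-t)^m / (m ! : ℝ)) (Real.exp (-t)) := by
  rw [Real.exp_eq_exp_ℝ]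
  exact NormedSpace.expSeries_div_hasSum_exp (-t)

private lemma hasSum_A (t : ℝ) : ∀ k : ℕ,
    HasSum (fun m : ℕ => (-1:ℝ)^m * t^(k+1+m) / ((m ! : ℕ) * ((k ! : ℕ)) * (((k:ℕ):ℝ)+1+m)))
      (1 - Real.exp (-t) * taylorExp k t) := by
  intro k
  induction k with
  | zero =>
    have h0 := (hasSum_nat_add_iff' (f := fun m : ℕ => (-t)^m / (m ! : ℝ)) 1).mpr
      (hasSum_exp_neg t)
    simp only [Finset.sum_range_one, pow_zero, Nat.factorial_zero, Nat.cast_one, div_one] at h0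
    have h1 := h0.neg
    have hfun : (fun m : ℕ =>
        (-1:ℝ)^m * t^(0+1+m) / ((m ! : ℕ) * (((0:ℕ)! : ℕ)) * (((0:ℕ):ℝ)+1+m)))
        = fun m : ℕ => -((-t)^(m+1) / (((m+1)! : ℕ) : ℝ)) := by
      funext m
      rw [neg_pow]
      push_cast [Nat.factorial_succ, Nat.factorial_zero]
      ring
    rw [hfun]
    have htay0 : taylorExp 0 t = 1 := by simp [taylorExp]
    rw [htay0]
    convert h1 using 1
    · rfl
    ring
  | succ k ih =>
    have hb := (hasSum_exp_neg t).mul_right (t^(k+1) / (((k+1)! : ℕ) : ℝ))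
    have hsub := ih.sub hb
    have h0 := (hasSum_nat_add_iff'
      (f := fun m : ℕ => (-1:ℝ)^m * t^(k+1+m) / ((m ! : ℕ) * ((k ! : ℕ)) * (((k:ℕ):ℝ)+1+m))
        - (-t)^m / (m ! : ℝ) * (t^(k+1) / (((k+1)! : ℕ) : ℝ))) 1).mpr hsub
    have hz : ∑ i ∈ range 1,
        ((-1:ℝ)^i * t^(k+1+i) / ((i ! : ℕ) * ((k ! : ℕ)) * (((k:ℕ):ℝ)+1+i))
          - (-t)^i / (i ! : ℝ) * (t^(k+1) / (((k+1)! : ℕ) : ℝ))) = 0 := by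
      rw [Finset.sum_range_one]
      have hk : ((k ! : ℕ) : ℝ) ≠ 0 := Nat.cast_ne_zero.mpr (Nat.factorial_ne_zero k)
      push_cast [Nat.factorial_succ]
      field_simp
      ring
    rw [hz, sub_zero] at h0
    have hfun : (fun m : ℕ =>
        (-1:ℝ)^(m+1) * t^(k+1+(m+1)) / (((m+1)! : ℕ) * ((k ! : ℕ)) * (((k:ℕ):ℝ)+1+(m+1 : ℕ)))
          - (-t)^(m+1) / ((m+1)! : ℝ) * (t^(k+1) / (((k+1)! : ℕ) : ℝ)))
        = fun m : ℕ =>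
          (-1:ℝ)^m * t^(k+1+1+m) / ((m ! : ℕ) * (((k+1)! : ℕ)) * (((k+1:ℕ):ℝ)+1+m)) := by
      funext m
      have hm : ((m ! : ℕ) : ℝ) ≠ 0 := Nat.cast_ne_zero.mpr (Nat.factorial_ne_zero m)
      have hk : ((k ! : ℕ) : ℝ) ≠ 0 := Nat.cast_ne_zero.mpr (Nat.factorial_ne_zero k)
      have hpow : t^(k+1+(m+1)) = t^(k+1+1+m) := by ring_nf
      rw [neg_pow, hpow]
      push_cast [Nat.factorial_succ]
      field_simp
      ring
    rw [hfun] at h0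
    have htay : taylorExp (k+1) t = taylorExp k t + t^(k+1) / (((k+1)! : ℕ) : ℝ) := by
      rw [taylorExp, taylorExp, Finset.sum_range_succ]
    rw [htay, show (1 : ℝ) - Real.exp (-t) * (taylorExp k t + t^(k+1) / (((k+1)! : ℕ) : ℝ))
      = 1 - Real.exp (-t) * taylorExp k t
        - Real.exp (-t) * (t^(k+1) / (((k+1)! : ℕ) : ℝ)) from by ring]
    exact h0

private lemma hasSum_B (k : ℕ) (t : ℝ) (ht : 0 < t) :
    HasSum (fun m : ℕ => (-1:ℝ)^m * t^m / ((m ! : ℕ) * ((k ! : ℕ)) * (((k:ℕ):ℝ)+1+m)))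
      ((1 - Real.exp (-t) * taylorExp k t) / t^(k+1)) := by
  have h := (hasSum_A t k).div_const (t^(k+1))
  have hfun : (fun m : ℕ =>
      (-1:ℝ)^m * t^(k+1+m) / ((m ! : ℕ) * ((k ! : ℕ)) * (((k:ℕ):ℝ)+1+m)) / t^(k+1))
      = fun m : ℕ => (-1:ℝ)^m * t^m / ((m ! : ℕ) * ((k ! : ℕ)) * (((k:ℕ):ℝ)+1+m)) := by
    funext m
    have hm : ((m ! : ℕ) : ℝ) ≠ 0 := Nat.cast_ne_zero.mpr (Nat.factorial_ne_zero m)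
    have hk : ((k ! : ℕ) : ℝ) ≠ 0 := Nat.cast_ne_zero.mpr (Nat.factorial_ne_zero k)
    have hd : ((k:ℕ):ℝ)+1+m ≠ 0 := by positivity
    rw [pow_add]
    field_simp
  rw [hfun] at h
  exact h


theorem stmt17 (n : ℕ) (hn : 1 ≤ n) :
    (∀ t : ℝ, 0 < t →
      cda (2*n) 1 t = ∑ j ∈ Finset.range n,
        ((n - 1).choose j : ℝ) * (-1 : ℝ) ^ j * ((2*j)! : ℝ) *
          (1 - Real.exp (-t) * taylorExp (2*j) t) / t ^ (2*j + 1)) ∧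
    (∀ X : EuclideanSpace ℝ (Fin (2 * (2*n))), X ≠ 0 →
      cda (2*n) 1 (‖X‖^2) = ∑ j ∈ Finset.range n,
        ((n - 1).choose j : ℝ) * (-1 : ℝ) ^ j * ((2*j)! : ℝ) *
          (1 - Real.exp (-‖X‖^2) * taylorExp (2*j) (‖X‖^2)) / ‖X‖ ^ (2 + 4*j)) := by
  obtain ⟨N, rfl⟩ : ∃ N, n = N+1 := ⟨n-1, by omega⟩
  have hmain : ∀ t : ℝ, 0 < t →
      cda (2*(N+1)) 1 t = ∑ j ∈ Finset.range (N+1),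
        ((N+1 - 1).choose j : ℝ) * (-1 : ℝ) ^ j * ((2*j)! : ℝ) *
          (1 - Real.exp (-t) * taylorExp (2*j) t) / t ^ (2*j + 1) := by
    intro t ht
    simp only [Nat.add_sub_cancel]
    -- summability of the even and odd parts of the cda series
    have hsumE : Summable (fun p : ℕ =>
        t^(2*p) / (((2*p)‼ * (2*p + 2*(N+1) - 1)‼ : ℕ) : ℝ)) := by
      refine Summable.of_nonneg_of_le (fun p => by positivity) (fun p => ?_)
        (Real.summable_pow_div_factorial (t^2/2))
      have hc : (2^p * p ! : ℕ) ≤ ((2*p)‼ * (2*p + 2*(N+1) - 1)‼ : ℕ) := by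
        calc 2^p * p ! = (2*p)‼ * 1 := by rw [Nat.doubleFactorial_two_mul]; ring
        _ ≤ (2*p)‼ * (2*p + 2*(N+1) - 1)‼ :=
            Nat.mul_le_mul_left _ (Nat.doubleFactorial_pos _)
      have hcr : ((2:ℝ)^p * (p ! : ℕ)) ≤ (((2*p)‼ * (2*p+2*(N+1)-1)‼ : ℕ):ℝ) := by
        exact_mod_cast hc
      have h1 : (t^2/2)^p/(p ! : ℝ) = t^(2*p) / ((2:ℝ)^p * (p ! : ℕ)) := by
        rw [div_pow, div_div, pow_mul]
      rw [h1]
      gcongr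
    have hsumO : Summable (fun p : ℕ =>
        t^(2*p+1) / (((2*p+1)‼ * (2*p + 2*(N+1))‼ : ℕ) : ℝ)) := by
      refine Summable.of_nonneg_of_le (fun p => by positivity) (fun p => ?_)
        ((Real.summable_pow_div_factorial (t^2/2)).mul_left t)
      have hc : (2^p * p ! : ℕ) ≤ ((2*p+1)‼ * (2*p + 2*(N+1))‼ : ℕ) := by
        calc 2^p * p ! ≤ (2*p+1)‼ := df_odd_ge p
        _ = (2*p+1)‼ * 1 := by ring
        _ ≤ (2*p+1)‼ * (2*p + 2*(N+1))‼ :=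
            Nat.mul_le_mul_left _ (Nat.doubleFactorial_pos _)
      have hcr : ((2:ℝ)^p * (p ! : ℕ)) ≤ (((2*p+1)‼ * (2*p+2*(N+1))‼ : ℕ):ℝ) := by
        exact_mod_cast hc
      have h1 : t * ((t^2/2)^p/(p ! : ℝ)) = t * t^(2*p) / ((2:ℝ)^p * (p ! : ℕ)) := by
        rw [div_pow, div_div, pow_mul]; ring
      have h2 : t^(2*p+1) = t * t^(2*p) := by ring
      rw [h1, h2]
      gcongr
    -- per-j HasSum of the right-hand side summands
    have hj : ∀ j ∈ Finset.range (N+1), HasSum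
        (fun m : ℕ => ((N.choose j : ℕ):ℝ) * (-1)^j * (((2*j)! : ℕ):ℝ) *
          ((-1:ℝ)^m * t^m / ((m ! : ℕ) * (((2*j) ! : ℕ)) * ((((2*j):ℕ):ℝ)+1+m))))
        (((N.choose j : ℕ):ℝ) * (-1)^j * (((2*j)! : ℕ):ℝ) *
          (1 - Real.exp (-t) * taylorExp (2*j) t) / t ^ (2*j + 1)) := by
      intro j _
      have h := (hasSum_B (2*j) t ht).mul_left
        (((N.choose j : ℕ):ℝ) * (-1)^j * (((2*j)! : ℕ):ℝ))
      rw [mul_div_assoc]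
      exact h
    have hG := hasSum_sum hj
    -- rewrite the summed function using the key combinatorial identity
    have hGfun : (fun m : ℕ => ∑ j ∈ range (N+1),
        ((N.choose j : ℕ):ℝ) * (-1)^j * (((2*j)! : ℕ):ℝ) *
          ((-1:ℝ)^m * t^m / ((m ! : ℕ) * (((2*j) ! : ℕ)) * ((((2*j):ℕ):ℝ)+1+m))))
        = fun m : ℕ => (-1:ℝ)^m * t^m / (m ! : ℝ) *
            (((N ! : ℕ):ℝ) * 2^N / ∏ i ∈ range (N+1), (((m:ℝ)+1)+2*i)) := by
      funext m
      have hterm : ∀ j ∈ range (N+1),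
          ((N.choose j : ℕ):ℝ) * (-1)^j * (((2*j)! : ℕ):ℝ) *
            ((-1:ℝ)^m * t^m / ((m ! : ℕ) * (((2*j) ! : ℕ)) * ((((2*j):ℕ):ℝ)+1+m)))
          = ((-1:ℝ)^m * t^m / (m ! : ℝ)) *
              ((N.choose j : ℕ):ℝ) * (-1)^j / (2*(j:ℕ)+((m:ℝ)+1)) := by
        intro j _
        have hm : ((m ! : ℕ) : ℝ) ≠ 0 := Nat.cast_ne_zero.mpr (Nat.factorial_ne_zero m)
        have hk : (((2*j) ! : ℕ) : ℝ) ≠ 0 := Nat.cast_ne_zero.mpr (Nat.factorial_ne_zero _)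
        have hd : (((2*j):ℕ):ℝ)+1+m ≠ 0 := by positivity
        have hd2 : 2*((j:ℕ):ℝ)+((m:ℝ)+1) ≠ 0 := by positivity
        field_simp
        push_cast
        ring
      rw [Finset.sum_congr rfl hterm]
      have : ∑ j ∈ range (N+1),
          ((-1:ℝ)^m * t^m / (m ! : ℝ)) * ((N.choose j : ℕ):ℝ) * (-1)^j / (2*(j:ℕ)+((m:ℝ)+1))
          = ((-1:ℝ)^m * t^m / (m ! : ℝ)) *
            ∑ j ∈ range (N+1), ((N.choose j : ℕ):ℝ) * (-1)^j / (2*(j:ℕ)+((m:ℝ)+1)) := by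
        rw [Finset.mul_sum]
        exact Finset.sum_congr rfl (fun j _ => by ring)
      rw [this, key_sum N ((m:ℝ)+1) (by positivity)]
    rw [hGfun] at hG
    -- even part
    have hE := (hsumE.hasSum).mul_left ((2:ℝ)^N * ((N ! : ℕ):ℝ))
    have hEfun : (fun p : ℕ => ((2:ℝ)^N * ((N ! : ℕ):ℝ)) *
        (t^(2*p) / (((2*p)‼ * (2*p + 2*(N+1) - 1)‼ : ℕ) : ℝ)))
        = fun p : ℕ => (-1:ℝ)^(2*p) * t^(2*p) / (((2*p) ! : ℕ) : ℝ) *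
            (((N ! : ℕ):ℝ) * 2^N / ∏ i ∈ range (N+1), ((((2*p :ℕ):ℝ)+1)+2*i)) := by
      funext p
      have hidx : 2*p + 2*(N+1) - 1 = 2*p+2*N+1 := by omega
      rw [hidx]
      have hprod : (∏ i ∈ range (N+1), ((((2*p:ℕ):ℝ))+1+2*(i:ℕ)))
          = ((∏ i ∈ range (N+1), (2*p+1+2*i) : ℕ) : ℝ) := by
        rw [Nat.cast_prod]
        exact Finset.prod_congr rfl (fun i _ => by push_cast; ring)
      have hcl : ((2*p)! : ℕ) * (∏ i ∈ range (N+1), (2*p+1+2*i) : ℕ)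
          = ((2*p)‼ * (2*p+2*N+1)‼ : ℕ) := claimE p N
      have hone : (-1:ℝ)^(2*p) = 1 := by
        rw [pow_mul]; norm_num
      have hprodpos : (0:ℕ) < ∏ i ∈ range (N+1), (2*p+1+2*i) :=
        Finset.prod_pos (fun i _ => by omega)
      have hfa : (((2*p)! : ℕ) : ℝ) ≠ 0 := Nat.cast_ne_zero.mpr (Nat.factorial_ne_zero _)
      have hfb : ((∏ i ∈ range (N+1), (2*p+1+2*i) : ℕ) : ℝ) ≠ 0 :=
        Nat.cast_ne_zero.mpr hprodpos.ne'
      have hD : (((2*p)‼ * (2*p+2*N+1)‼ : ℕ) : ℝ)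
          = (((2*p)! : ℕ) : ℝ) * ((∏ i ∈ range (N+1), (2*p+1+2*i) : ℕ) : ℝ) := by
        rw [← Nat.cast_mul, ← hcl]
      rw [hone, hprod, hD]
      field_simp
    rw [hEfun] at hE
    -- odd part
    have hO := ((hsumO.hasSum).mul_left ((2:ℝ)^N * ((N ! : ℕ):ℝ))).neg
    have hOfun : (fun p : ℕ => -(((2:ℝ)^N * ((N ! : ℕ):ℝ)) *
        (t^(2*p+1) / (((2*p+1)‼ * (2*p + 2*(N+1))‼ : ℕ) : ℝ))))
        = fun p : ℕ => (-1:ℝ)^(2*p+1) * t^(2*p+1) / (((2*p+1) ! : ℕ) : ℝ) *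
            (((N ! : ℕ):ℝ) * 2^N / ∏ i ∈ range (N+1), ((((2*p+1 :ℕ):ℝ)+1)+2*i)) := by
      funext p
      have hidx : 2*p + 2*(N+1) = 2*p+2*N+2 := by omega
      rw [hidx]
      have hprod : (∏ i ∈ range (N+1), ((((2*p+1:ℕ):ℝ))+1+2*(i:ℕ)))
          = ((∏ i ∈ range (N+1), (2*p+2+2*i) : ℕ) : ℝ) := by
        rw [Nat.cast_prod]
        exact Finset.prod_congr rfl (fun i _ => by push_cast; ring)
      have hcl : ((2*p+1)! : ℕ) * (∏ i ∈ range (N+1), (2*p+2+2*i) : ℕ)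
          = ((2*p+1)‼ * (2*p+2*N+2)‼ : ℕ) := claimO p N
      have hone : (-1:ℝ)^(2*p+1) = -1 := by
        rw [pow_succ, pow_mul]; norm_num
      have hprodpos : (0:ℕ) < ∏ i ∈ range (N+1), (2*p+2+2*i) :=
        Finset.prod_pos (fun i _ => by omega)
      have hfa : (((2*p+1)! : ℕ) : ℝ) ≠ 0 := Nat.cast_ne_zero.mpr (Nat.factorial_ne_zero _)
      have hfb : ((∏ i ∈ range (N+1), (2*p+2+2*i) : ℕ) : ℝ) ≠ 0 :=
        Nat.cast_ne_zero.mpr hprodpos.ne'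
      have hD : (((2*p+1)‼ * (2*p+2*N+2)‼ : ℕ) : ℝ)
          = (((2*p+1)! : ℕ) : ℝ) * ((∏ i ∈ range (N+1), (2*p+2+2*i) : ℕ) : ℝ) := by
        rw [← Nat.cast_mul, ← hcl]
      rw [hone, hprod, hD]
      field_simp
    rw [hOfun] at hO
    -- combine even and odd parts
    have hcomb := HasSum.even_add_odd
      (f := fun m : ℕ => (-1:ℝ)^m * t^m / (m ! : ℝ) *
        (((N ! : ℕ):ℝ) * 2^N / ∏ i ∈ range (N+1), (((m:ℝ)+1)+2*i))) hE hO
    have hval := hG.unique hcomb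
    -- finish: rewrite cda
    have hcoef : ((2*(N+1))‼ : ℝ) / ((2*(N+1) : ℕ) : ℝ) = (2:ℝ)^N * ((N ! : ℕ):ℝ) := by
      have h1 : ((2*(N+1))‼ : ℕ) = 2^(N+1) * (N+1)! := Nat.doubleFactorial_two_mul (N+1)
      rw [h1]
      push_cast [Nat.factorial_succ, pow_succ]
      have hN1 : ((N:ℝ)+1) ≠ 0 := by positivity
      field_simp
    simp only [cda]
    rw [hcoef, one_mul, hval]
    ring
  refine ⟨hmain, ?_⟩
  intro X hX
  have hnorm : 0 < ‖X‖ := norm_pos_iff.mpr hX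
  have ht : 0 < ‖X‖^2 := by positivity
  rw [hmain _ ht]
  refine Finset.sum_congr rfl fun j _ => ?_
  have hexp : (2:ℕ)+4*j = 2*(2*j+1) := by ring
  rw [hexp, pow_mul]
end

section
/- Let d ≥ 3 be an integer and let c_d = c_{d,α_d} and c_{d−2} = c_{d−2,α_{d−2}}, where α_m = 1 when m is even and α_m = π/2 when m is odd (note α_d = α_{d−2}). Then for every t ∈ ℝ, (d−1)·c_d(t) + t·c_d'(t) = (d−2)·c_{d−2}(t). -/
open scoped Nat

namespace Stmt18Aux

/-- Even-type term. -/
noncomputable def fA (m p : ℕ) (x : ℝ) : ℝ := x ^ (2*p) / (((2*p)‼ * (2*p + m)‼ : ℕ) : ℝ)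

/-- Odd-type term. -/
noncomputable def fB (m p : ℕ) (x : ℝ) : ℝ := x ^ (2*p+1) / (((2*p+1)‼ * (2*p + m)‼ : ℕ) : ℝ)

/-- Derivative of the even-type term. -/
noncomputable def fA' (m p : ℕ) (x : ℝ) : ℝ :=
  ((2*p : ℕ) : ℝ) * x ^ (2*p - 1) / (((2*p)‼ * (2*p + m)‼ : ℕ) : ℝ)

/-- Derivative of the odd-type term. -/
noncomputable def fB' (m p : ℕ) (x : ℝ) : ℝ :=
  ((2*p+1 : ℕ) : ℝ) * x ^ (2*p) / (((2*p+1)‼ * (2*p + m)‼ : ℕ) : ℝ)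

lemma hasDerivAt_fA (m p : ℕ) (x : ℝ) : HasDerivAt (fA m p) (fA' m p x) x :=
  (hasDerivAt_pow (2*p) x).div_const _

lemma hasDerivAt_fB (m p : ℕ) (x : ℝ) : HasDerivAt (fB m p) (fB' m p x) x := by
  unfold fB fB'
  have := (hasDerivAt_pow (2*p+1) x).div_const (((2*p+1)‼ * (2*p + m)‼ : ℕ) : ℝ)
  simpa using this

lemma two_pow_mul_factorial_le_even (p : ℕ) : 2^p * p ! ≤ (2*p)‼ := by
  rw [Nat.doubleFactorial_two_mul]

lemma two_pow_mul_factorial_le_odd (p : ℕ) : 2^p * p ! ≤ (2*p+1)‼ := by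
  induction p with
  | zero => simp
  | succ q ih =>
    have h1 : 2 * (q+1) + 1 = (2*q+1) + 2 := by ring
    rw [h1, Nat.doubleFactorial_add_two]
    calc 2 ^ (q+1) * (q+1)! = (2*(q+1)) * (2^q * q !) := by
          rw [Nat.factorial_succ]; ring
      _ ≤ (2*q+1+2) * (2*q+1)‼ := by
          apply Nat.mul_le_mul
          · omega
          · exact ih

lemma denA_ge (m p : ℕ) : ((2^p * p ! : ℕ) : ℝ) ≤ (((2*p)‼ * (2*p + m)‼ : ℕ) : ℝ) := by
  exact_mod_cast le_trans (two_pow_mul_factorial_le_even p)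
    (Nat.le_mul_of_pos_right _ (Nat.doubleFactorial_pos _))

lemma denB_ge (m p : ℕ) : ((2^p * p ! : ℕ) : ℝ) ≤ (((2*p+1)‼ * (2*p + m)‼ : ℕ) : ℝ) := by
  exact_mod_cast le_trans (two_pow_mul_factorial_le_odd p)
    (Nat.le_mul_of_pos_right _ (Nat.doubleFactorial_pos _))

lemma u_summable (R c : ℝ) : Summable (fun p : ℕ => c * (R^2)^p / p !) := by
  simpa [mul_div_assoc] using (Real.summable_pow_div_factorial (R^2)).mul_left c

lemma p_le_two_pow (p : ℕ) : ((p : ℝ)) ≤ 2^p := by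
  exact_mod_cast (Nat.lt_two_pow_self (n := p)).le

lemma bound_fA (m p : ℕ) {x R : ℝ} (hx : |x| ≤ R) (hR : 1 ≤ R) :
    ‖fA m p x‖ ≤ 1 * (R^2)^p / p ! := by
  have h0 : (0:ℝ) ≤ R := le_trans zero_le_one hR
  rw [fA, norm_div, Real.norm_eq_abs, Real.norm_eq_abs, abs_pow,
    Nat.abs_cast]
  calc |x| ^ (2*p) / (((2*p)‼ * (2*p + m)‼ : ℕ) : ℝ)
      ≤ R ^ (2*p) / ((2^p * p ! : ℕ) : ℝ) :=
        div_le_div₀ (by positivity) (pow_le_pow_left₀ (abs_nonneg x) hx _)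
          (by positivity) (denA_ge m p)
    _ = (R^2)^p / ((2:ℝ)^p * p !) := by rw [pow_mul]; push_cast; ring
    _ ≤ 1 * (R^2)^p / p ! := by
        rw [one_mul]
        gcongr
        exact le_mul_of_one_le_left (by positivity) (one_le_pow₀ (by norm_num))

lemma bound_fB (m p : ℕ) {x R : ℝ} (hx : |x| ≤ R) (hR : 1 ≤ R) :
    ‖fB m p x‖ ≤ R * (R^2)^p / p ! := by
  have h0 : (0:ℝ) ≤ R := le_trans zero_le_one hR
  rw [fB, norm_div, Real.norm_eq_abs, Real.norm_eq_abs, abs_pow,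
    Nat.abs_cast]
  calc |x| ^ (2*p+1) / (((2*p+1)‼ * (2*p + m)‼ : ℕ) : ℝ)
      ≤ R ^ (2*p+1) / ((2^p * p ! : ℕ) : ℝ) :=
        div_le_div₀ (by positivity) (pow_le_pow_left₀ (abs_nonneg x) hx _)
          (by positivity) (denB_ge m p)
    _ = R * (R^2)^p / ((2:ℝ)^p * p !) := by rw [pow_succ, pow_mul]; push_cast; ring
    _ ≤ R * (R^2)^p / p ! := by
        gcongr
        exact le_mul_of_one_le_left (by positivity) (one_le_pow₀ (by norm_num))

lemma bound_fA' (m p : ℕ) {x R : ℝ} (hx : |x| ≤ R) (hR : 1 ≤ R) :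
    ‖fA' m p x‖ ≤ 2 * (R^2)^p / p ! := by
  have h0 : (0:ℝ) ≤ R := le_trans zero_le_one hR
  have hxx : (0:ℝ) ≤ |x| := abs_nonneg x
  rw [fA', norm_div, Real.norm_eq_abs, Real.norm_eq_abs, abs_mul, abs_pow,
    Nat.abs_cast, Nat.abs_cast]
  have hnum : ((2*p : ℕ) : ℝ) * |x| ^ (2*p-1) ≤ (2 * 2^p) * R ^ (2*p) := by
    apply mul_le_mul
    · push_cast
      nlinarith [p_le_two_pow p]
    · calc |x| ^ (2*p-1) ≤ R ^ (2*p-1) := pow_le_pow_left₀ hxx hx _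
        _ ≤ R ^ (2*p) := pow_le_pow_right₀ hR (by omega)
    · positivity
    · positivity
  calc ((2*p : ℕ) : ℝ) * |x| ^ (2*p-1) / (((2*p)‼ * (2*p + m)‼ : ℕ) : ℝ)
      ≤ (2 * 2^p) * R ^ (2*p) / ((2^p * p ! : ℕ) : ℝ) :=
        div_le_div₀ (by positivity) hnum (by positivity) (denA_ge m p)
    _ = 2 * (R^2)^p / p ! := by
        rw [pow_mul]; push_cast
        rw [div_eq_div_iff (by positivity) (by positivity)]
        ring
    _ ≤ 2 * (R^2)^p / p ! := le_refl _

lemma bound_fB' (m p : ℕ) {x R : ℝ} (hx : |x| ≤ R) (hR : 1 ≤ R) :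
    ‖fB' m p x‖ ≤ 3 * (R^2)^p / p ! := by
  have h0 : (0:ℝ) ≤ R := le_trans zero_le_one hR
  have hxx : (0:ℝ) ≤ |x| := abs_nonneg x
  rw [fB', norm_div, Real.norm_eq_abs, Real.norm_eq_abs, abs_mul, abs_pow,
    Nat.abs_cast, Nat.abs_cast]
  have hnum : ((2*p+1 : ℕ) : ℝ) * |x| ^ (2*p) ≤ (3 * 2^p) * R ^ (2*p) := by
    apply mul_le_mul
    · push_cast
      nlinarith [p_le_two_pow p, one_le_pow₀ (by norm_num : (1:ℝ) ≤ 2) (n := p)]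
    · exact pow_le_pow_left₀ hxx hx _
    · positivity
    · positivity
  calc ((2*p+1 : ℕ) : ℝ) * |x| ^ (2*p) / (((2*p+1)‼ * (2*p + m)‼ : ℕ) : ℝ)
      ≤ (3 * 2^p) * R ^ (2*p) / ((2^p * p ! : ℕ) : ℝ) :=
        div_le_div₀ (by positivity) hnum (by positivity) (denB_ge m p)
    _ = 3 * (R^2)^p / p ! := by
        rw [pow_mul]; push_cast
        rw [div_eq_div_iff (by positivity) (by positivity)]
        ring

lemma summable_fA (m : ℕ) (x : ℝ) : Summable (fun p => fA m p x) :=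
  Summable.of_norm_bounded (u_summable (|x|+1) 1)
    (fun p => bound_fA m p (by linarith [abs_nonneg x]) (by linarith [abs_nonneg x]))

lemma summable_fB (m : ℕ) (x : ℝ) : Summable (fun p => fB m p x) :=
  Summable.of_norm_bounded (u_summable (|x|+1) (|x|+1))
    (fun p => bound_fB m p (by linarith [abs_nonneg x]) (by linarith [abs_nonneg x]))

lemma summable_fA' (m : ℕ) (x : ℝ) : Summable (fun p => fA' m p x) :=
  Summable.of_norm_bounded (u_summable (|x|+1) 2)
    (fun p => bound_fA' m p (by linarith [abs_nonneg x]) (by linarith [abs_nonneg x]))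

lemma summable_fB' (m : ℕ) (x : ℝ) : Summable (fun p => fB' m p x) :=
  Summable.of_norm_bounded (u_summable (|x|+1) 3)
    (fun p => bound_fB' m p (by linarith [abs_nonneg x]) (by linarith [abs_nonneg x]))

lemma hasDerivAt_tsum_fA (m : ℕ) (t : ℝ) :
    HasDerivAt (fun x => ∑' p, fA m p x) (∑' p, fA' m p t) t := by
  have hR : 1 ≤ |t| + 1 := by linarith [abs_nonneg t]
  refine hasDerivAt_tsum_of_isPreconnected (u_summable (|t|+1) 2)
    (Metric.isOpen_ball (x := (0:ℝ)) (ε := |t|+1))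
    ((convex_ball (0:ℝ) (|t|+1)).isPreconnected)
    (fun p y _ => hasDerivAt_fA m p y)
    (fun p y hy => bound_fA' m p (le_of_lt (by simpa [Real.dist_eq] using hy)) hR)
    (Metric.mem_ball_self (by linarith)) (summable_fA m 0) ?_
  simp only [Metric.mem_ball, Real.dist_eq, sub_zero]
  linarith

lemma hasDerivAt_tsum_fB (m : ℕ) (t : ℝ) :
    HasDerivAt (fun x => ∑' p, fB m p x) (∑' p, fB' m p t) t := by
  have hR : 1 ≤ |t| + 1 := by linarith [abs_nonneg t]
  refine hasDerivAt_tsum_of_isPreconnected (u_summable (|t|+1) 3)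
    (Metric.isOpen_ball (x := (0:ℝ)) (ε := |t|+1))
    ((convex_ball (0:ℝ) (|t|+1)).isPreconnected)
    (fun p y _ => hasDerivAt_fB m p y)
    (fun p y hy => bound_fB' m p (le_of_lt (by simpa [Real.dist_eq] using hy)) hR)
    (Metric.mem_ball_self (by linarith)) (summable_fB m 0) ?_
  simp only [Metric.mem_ball, Real.dist_eq, sub_zero]
  linarith

lemma termA (e p : ℕ) (t : ℝ) :
    ((e:ℝ)+2) * fA (e+2) p t + t * fA' (e+2) p t = fA e p t := by
  unfold fA fA'
  have h2 : (2*p + (e+2))‼ = (2*p+e+2) * (2*p+e)‼ := by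
    rw [show 2*p + (e+2) = (2*p+e)+2 from by ring, Nat.doubleFactorial_add_two]
  have d1 : (((2*p)‼ : ℕ) : ℝ) ≠ 0 := by positivity
  have d2 : (((2*p+e)‼ : ℕ) : ℝ) ≠ 0 := by positivity
  have d3 : ((2*p+e+2 : ℕ) : ℝ) ≠ 0 := by positivity
  rcases p with _ | q
  · simp only [Nat.mul_zero, Nat.zero_add, h2]
    push_cast
    field_simp
    rw [Nat.doubleFactorial_add_two]; push_cast; ring
  · have hexp : 2*(q+1) - 1 = 2*q+1 := by omega
    simp only [h2, hexp]
    have hpow : t ^ (2*(q+1)) = t ^ (2*q+1) * t := by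
      rw [show 2*(q+1) = (2*q+1)+1 from by omega, pow_succ]
    rw [hpow]
    push_cast
    field_simp
    ring

lemma termB (e p : ℕ) (t : ℝ) :
    ((e:ℝ)+2) * fB (e+3) p t + t * fB' (e+3) p t = fB (e+1) p t := by
  unfold fB fB'
  have h2 : (2*p + (e+3))‼ = (2*p+e+3) * (2*p+(e+1))‼ := by
    rw [show 2*p + (e+3) = (2*p+e+1)+2 from by omega, Nat.doubleFactorial_add_two,
      show 2*p+e+1+2 = 2*p+e+3 from by omega, show 2*p+(e+1) = 2*p+e+1 from by omega]
  have d1 : (((2*p+1)‼ : ℕ) : ℝ) ≠ 0 := by positivity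
  have d2 : (((2*p+(e+1))‼ : ℕ) : ℝ) ≠ 0 := by positivity
  have d3 : ((2*p+e+3 : ℕ) : ℝ) ≠ 0 := by positivity
  have hpow : t ^ (2*p+1) = t ^ (2*p) * t := pow_succ t (2*p)
  simp only [h2]
  rw [hpow]
  push_cast
  field_simp
  ring

lemma sumA (e : ℕ) (t : ℝ) :
    ((e:ℝ)+2) * (∑' p, fA (e+2) p t) + t * (∑' p, fA' (e+2) p t) = ∑' p, fA e p t := by
  rw [← tsum_mul_left, ← tsum_mul_left,
    ← Summable.tsum_add ((summable_fA _ t).mul_left _) ((summable_fA' _ t).mul_left _)]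
  exact tsum_congr (fun p => termA e p t)

lemma sumB (e : ℕ) (t : ℝ) :
    ((e:ℝ)+2) * (∑' p, fB (e+3) p t) + t * (∑' p, fB' (e+3) p t) = ∑' p, fB (e+1) p t := by
  rw [← tsum_mul_left, ← tsum_mul_left,
    ← Summable.tsum_add ((summable_fB _ t).mul_left _) ((summable_fB' _ t).mul_left _)]
  exact tsum_congr (fun p => termB e p t)

lemma cda_eq (e : ℕ) (α : ℝ) : cda (e+3) α =
    fun x => (((e+3)‼ : ℝ) / ((e+3 : ℕ) : ℝ)) *
      (α * (∑' p, fA (e+2) p x) - ∑' p, fB (e+3) p x) := by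
  funext x
  unfold cda fA fB
  have h1 : ∀ p : ℕ, 2*p + (e+3) - 1 = 2*p + (e+2) := fun p => by omega
  simp only [h1]

lemma cda_eq' (e : ℕ) (α t : ℝ) : cda (e+1) α t =
    (((e+1)‼ : ℝ) / ((e+1 : ℕ) : ℝ)) *
      (α * (∑' p, fA e p t) - ∑' p, fB (e+1) p t) := by
  unfold cda fA fB
  have h1 : ∀ p : ℕ, 2*p + (e+1) - 1 = 2*p + e := fun p => by omega
  simp only [h1]

lemma key (e : ℕ) (α t : ℝ) :
    (((e+3:ℕ) : ℝ) - 1) * cda (e+3) α t + t * deriv (cda (e+3) α) t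
      = (((e+3:ℕ) : ℝ) - 2) * cda (e+1) α t := by
  have hD : HasDerivAt (cda (e+3) α)
      ((((e+3)‼ : ℝ) / ((e+3 : ℕ) : ℝ)) *
        (α * (∑' p, fA' (e+2) p t) - ∑' p, fB' (e+3) p t)) t := by
    rw [cda_eq]
    exact (((hasDerivAt_tsum_fA (e+2) t).const_mul α).sub (hasDerivAt_tsum_fB (e+3) t)).const_mul _
  rw [hD.deriv, show cda (e+3) α t =
      (((e+3)‼ : ℝ) / ((e+3 : ℕ) : ℝ)) *
        (α * (∑' p, fA (e+2) p t) - ∑' p, fB (e+3) p t) from by rw [cda_eq], cda_eq']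
  have hC3 : (((e+3)‼ : ℕ) : ℝ) = ((e+3 : ℕ) : ℝ) * (((e+1)‼ : ℕ) : ℝ) := by
    have := Nat.doubleFactorial_add_two (e+1)
    rw [show (e+1)+2 = e+3 from by omega] at this
    exact_mod_cast this
  have he3 : ((e+3 : ℕ) : ℝ) ≠ 0 := by positivity
  have he1 : ((e+1 : ℕ) : ℝ) ≠ 0 := by positivity
  have hA := sumA e t
  have hB := sumB e t
  have hc3 : (((e+3)‼ : ℕ) : ℝ) / ((e+3 : ℕ) : ℝ) = (((e+1)‼ : ℕ) : ℝ) := by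
    rw [hC3]; field_simp
  have expand : (((e+3:ℕ):ℝ) - 2) = ((e+1 : ℕ) : ℝ) := by push_cast; ring
  have hcoef : (((e+3:ℕ):ℝ) - 1) = (e:ℝ) + 2 := by push_cast; ring
  have hc1' : ((e+1:ℕ):ℝ) * ((((e+1)‼:ℕ):ℝ) / ((e+1:ℕ):ℝ)) = (((e+1)‼:ℕ):ℝ) := by
    field_simp
  rw [hc3, expand, hcoef]
  conv_rhs => rw [← mul_assoc, hc1']
  calc ((e:ℝ) + 2) * ((((e+1)‼ : ℕ) : ℝ) * (α * (∑' p, fA (e+2) p t) - ∑' p, fB (e+3) p t))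
        + t * ((((e+1)‼ : ℕ) : ℝ) * (α * (∑' p, fA' (e+2) p t) - ∑' p, fB' (e+3) p t))
      = (((e+1)‼ : ℕ) : ℝ) *
          (α * (((e:ℝ)+2) * (∑' p, fA (e+2) p t) + t * (∑' p, fA' (e+2) p t))
            - (((e:ℝ)+2) * (∑' p, fB (e+3) p t) + t * (∑' p, fB' (e+3) p t))) := by ring
    _ = (((e+1)‼ : ℕ) : ℝ) * (α * (∑' p, fA e p t) - ∑' p, fB (e+1) p t) := by
        rw [hA, hB]

end Stmt18Aux

theorem stmt18 (d : ℕ) (hd : 3 ≤ d) :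
    ∀ t : ℝ,
      ((d : ℝ) - 1) * cda d (if Even d then (1:ℝ) else Real.pi / 2) t
          + t * deriv (cda d (if Even d then (1:ℝ) else Real.pi / 2)) t
        = ((d : ℝ) - 2) * cda (d - 2) (if Even (d - 2) then (1:ℝ) else Real.pi / 2) t := by
  obtain ⟨e, rfl⟩ : ∃ e, d = e + 3 := ⟨d - 3, by omega⟩
  intro t
  have h2 : e + 3 - 2 = e + 1 := by omega
  have hiff : Even (e + 1) ↔ Even (e + 3) :=
    ⟨fun ⟨k, hk⟩ => ⟨k+1, by omega⟩, fun ⟨k, hk⟩ => ⟨k-1, by omega⟩⟩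
  rw [h2]
  simp only [hiff]
  exact Stmt18Aux.key e _ t
end
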